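/- Let f : SU(2) × SU(2) → SU(2) be a continuous group homomorphism. Then f is trivial on at least one of the two factors: either f(g,1) = 1 for all g ∈ SU(2), or f(1,h) = 1 for all h ∈ SU(2). -/

import Mathlib

open Matrix
open scoped commutatorElement

namespace SU2ProofAux

lemma mk_mem (a b : ℂ) (h : a * star a + b * star b = 1) :
    !![a, b; -(star b), star a] ∈ Matrix.specialUnitaryGroup (Fin 2) ℂ := by
  rw [Matrix.mem_specialUnitaryGroup_iff]
  constructor
  · rw [Matrix.mem_unitaryGroup_iff]
    ext i j
    fin_cases i <;> fin_cases j <;>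
      simp [Matrix.mul_apply, Fin.sum_univ_two, Matrix.star_apply, Matrix.one_apply,
        Complex.star_def] <;>
      simp only [Complex.star_def] at h <;> ring_nf <;> ring_nf at h <;>
      linear_combination h
  · simp only [Complex.star_def] at h
    simp [Matrix.det_fin_two, Complex.star_def]
    ring_nf
    ring_nf at h
    linear_combination h

/-- Constructor for elements of SU(2). -/
def mk (a b : ℂ) (h : a * star a + b * star b = 1) :
    ↥(Matrix.specialUnitaryGroup (Fin 2) ℂ) := ⟨_, mk_mem a b h⟩

noncomputable instance : Group ↥(Matrix.specialUnitaryGroup (Fin 2) ℂ) :=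
  { (inferInstance : Monoid ↥(Matrix.specialUnitaryGroup (Fin 2) ℂ)) with
    inv := fun g => ⟨star g.1, by
      have h := Matrix.mem_specialUnitaryGroup_iff.1 g.2
      rw [Matrix.mem_specialUnitaryGroup_iff]
      refine ⟨Unitary.star_mem h.1, ?_⟩
      rw [Matrix.star_eq_conjTranspose, Matrix.det_conjTranspose, h.2, star_one]⟩
    inv_mul_cancel := fun g => Subtype.ext <| by
      have h := Matrix.mem_unitaryGroup_iff'.1 (Matrix.mem_specialUnitaryGroup_iff.1 g.2).1
      exact h }

lemma inv_coe (g : ↥(Matrix.specialUnitaryGroup (Fin 2) ℂ)) :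
    (g⁻¹ : ↥(Matrix.specialUnitaryGroup (Fin 2) ℂ)).1 = star g.1 := rfl

lemma entries (g : ↥(Matrix.specialUnitaryGroup (Fin 2) ℂ)) :
    g.1 1 1 = star (g.1 0 0) ∧ g.1 1 0 = -(star (g.1 0 1)) ∧
    g.1 0 0 * star (g.1 0 0) + g.1 0 1 * star (g.1 0 1) = 1 := by
  have h := Matrix.mem_specialUnitaryGroup_iff.1 g.2
  have h2 : star g.1 * g.1 = 1 := Matrix.mem_unitaryGroup_iff'.1 h.1
  have hadj : g.1 * g.1.adjugate = 1 := by rw [Matrix.mul_adjugate, h.2, one_smul]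
  have hst : star g.1 = g.1.adjugate := by
    calc star g.1 = star g.1 * (g.1 * g.1.adjugate) := by rw [hadj, mul_one]
    _ = (star g.1 * g.1) * g.1.adjugate := by rw [mul_assoc]
    _ = g.1.adjugate := by rw [h2, one_mul]
  rw [Matrix.adjugate_fin_two] at hst
  have e00 : star (g.1 0 0) = g.1 1 1 := by
    have := congrFun (congrFun hst 0) 0; simpa [Matrix.star_apply] using this
  have e01 : star (g.1 1 0) = -(g.1 0 1) := by
    have := congrFun (congrFun hst 0) 1; simpa [Matrix.star_apply] using this
  refine ⟨e00.symm, ?_, ?_⟩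
  · have := congrArg star e01; simpa using this
  · have hdet := h.2
    rw [Matrix.det_fin_two] at hdet
    rw [← e00] at hdet
    have : g.1 1 0 = -(star (g.1 0 1)) := by have := congrArg star e01; simpa using this
    rw [this] at hdet
    linear_combination hdet

set_option linter.unreachableTactic false in
set_option linter.unusedTactic false in
lemma commutant {X A : Matrix (Fin 2) (Fin 2) ℂ} (hX : ∀ c : ℂ, X ≠ c • 1)
    (h : X * A = A * X) : ∃ α β : ℂ, A = α • 1 + β • X := by
  have e : ∀ i j : Fin 2, (X * A) i j = (A * X) i j := fun i j => by rw [h]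
  have e00 := e 0 0; have e01 := e 0 1; have e10 := e 1 0; have e11 := e 1 1
  simp only [Matrix.mul_apply, Fin.sum_univ_two] at e00 e01 e10 e11
  by_cases hq : X 0 1 ≠ 0
  · refine ⟨A 0 0 - (A 0 1 / X 0 1) * X 0 0, A 0 1 / X 0 1, ?_⟩
    ext i j
    fin_cases i <;> fin_cases j <;> simp [Matrix.one_apply] <;> field_simp
    all_goals first
      | linear_combination (1 + X 0 1) * e00
      | linear_combination -X 0 1 * e00
      | linear_combination X 0 1 * e00
      | linear_combination e00
      | linear_combination e01 + X 0 1 * e00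
      | linear_combination -e01 - X 0 1 * e00
      | linear_combination e01
      | linear_combination -e01
      | linear_combination 2 * e01 + X 0 1 * e00
  push_neg at hq
  by_cases hr : X 1 0 ≠ 0
  · simp only [hq, zero_mul, mul_zero, add_zero, zero_add] at e00 e01 e10 e11
    have hA01 : A 0 1 = 0 := by
      have h2 : X 1 0 * A 0 1 = 0 := by linear_combination e11
      rcases mul_eq_zero.1 h2 with h' | h'
      · exact absurd h' hr
      · exact h'
    refine ⟨A 0 0 - (A 1 0 / X 1 0) * X 0 0, A 1 0 / X 1 0, ?_⟩
    ext i j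
    fin_cases i <;> fin_cases j <;> simp [Matrix.one_apply, hq, hA01] <;> field_simp
    all_goals first
      | linear_combination e10
      | linear_combination -e10
      | linear_combination 2 * e10
      | linear_combination -2 * e10
  push_neg at hr
  have hps : X 0 0 ≠ X 1 1 := by
    intro hcontra
    apply hX (X 0 0)
    ext i j
    fin_cases i <;> fin_cases j <;> simp [Matrix.one_apply, hq, hr, hcontra]
  have hps' : X 1 1 - X 0 0 ≠ 0 := sub_ne_zero.2 (Ne.symm hps)
  refine ⟨A 0 0 - ((A 1 1 - A 0 0) / (X 1 1 - X 0 0)) * X 0 0,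
    (A 1 1 - A 0 0) / (X 1 1 - X 0 0), ?_⟩
  have hA01 : A 0 1 = 0 := by
    have h2 : A 0 1 * (X 0 0 - X 1 1) = 0 := by
      rw [hq] at e01; linear_combination e01
    rcases mul_eq_zero.1 h2 with h' | h'
    · exact h'
    · exact absurd (by linear_combination h') hps
  have hA10 : A 1 0 = 0 := by
    have h2 : A 1 0 * (X 1 1 - X 0 0) = 0 := by
      rw [hr] at e10; linear_combination e10
    rcases mul_eq_zero.1 h2 with h' | h'
    · exact h'
    · exact absurd (by linear_combination -h') hps
  ext i j
  fin_cases i <;> fin_cases j <;> simp [Matrix.one_apply, hA01, hA10, hq, hr] <;> field_simp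
  ring

lemma scalar_of_comm2 {X A B : Matrix (Fin 2) (Fin 2) ℂ} (hA : X * A = A * X)
    (hB : X * B = B * X) (hAB : A * B ≠ B * A) : ∃ c : ℂ, X = c • 1 := by
  by_contra hX
  push_neg at hX
  obtain ⟨α, β, hA'⟩ := commutant hX hA
  obtain ⟨γ, δ, hB'⟩ := commutant hX hB
  apply hAB
  rw [hA', hB']
  simp only [add_mul, mul_add, smul_mul_assoc, mul_smul_comm, smul_smul, one_mul, mul_one]
  module

lemma diag_commutator (lam : ℂ) (h : lam * star lam = 1) :
    ∃ a b : ↥(Matrix.specialUnitaryGroup (Fin 2) ℂ),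
      (⁅a, b⁆ : ↥(Matrix.specialUnitaryGroup (Fin 2) ℂ)).1 = !![lam, 0; 0, star lam] := by
  obtain ⟨μ, hμ⟩ := IsAlgClosed.exists_pow_nat_eq lam (by norm_num : (0:ℕ) < 2)
  have hlen : μ * star μ = 1 := by
    have h2 : ((Complex.normSq μ : ℂ))^2 = 1 := by
      rw [← Complex.mul_conj, ← Complex.star_def]
      calc (μ * star μ)^2 = μ^2 * star (μ^2) := by rw [star_pow]; ring
      _ = lam * star lam := by rw [hμ]
      _ = 1 := h
    have h3 : (Complex.normSq μ)^2 = 1 := by exact_mod_cast h2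
    have h4 : Complex.normSq μ = 1 := by
      have := Complex.normSq_nonneg μ
      nlinarith
    rw [Complex.star_def, Complex.mul_conj, h4]
    norm_num
  refine ⟨mk μ 0 (by simpa using hlen), mk 0 1 (by simp), ?_⟩
  have hcoe : (⁅mk μ 0 (by simpa using hlen), mk 0 1 (by simp)⁆ :
      ↥(Matrix.specialUnitaryGroup (Fin 2) ℂ)).1
      = (mk μ 0 (by simpa using hlen)).1 * (mk 0 1 (by simp)).1 *
        star (mk μ 0 (by simpa using hlen)).1 * star (mk 0 1 (by simp)).1 := rfl
  have s1 : star (!![μ, 0; -(star (0:ℂ)), star μ]) = !![star μ, 0; 0, μ] := by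
    ext i j; fin_cases i <;> fin_cases j <;> simp [Matrix.star_apply]
  have s2 : star (!![(0:ℂ), 1; -(star (1:ℂ)), star (0:ℂ)]) = !![0, -1; 1, 0] := by
    ext i j; fin_cases i <;> fin_cases j <;> simp [Matrix.star_apply]
  rw [hcoe]
  simp only [mk]
  rw [s1, s2]
  rw [Matrix.mul_fin_two, Matrix.mul_fin_two, Matrix.mul_fin_two]
  have hlam : star lam = star μ * star μ := by
    rw [← hμ, pow_two, star_mul']
  ext i j
  fin_cases i <;> fin_cases j <;>
    simp [hlam, ← hμ] <;> ring

set_option maxHeartbeats 1000000 in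
lemma exists_commutator (g : ↥(Matrix.specialUnitaryGroup (Fin 2) ℂ)) :
    ∃ a b : ↥(Matrix.specialUnitaryGroup (Fin 2) ℂ), g = ⁅a, b⁆ := by
  obtain ⟨h11, h10, hnorm⟩ := entries g
  set a := g.1 0 0 with ha
  set b := g.1 0 1 with hb
  by_cases hb0 : b = 0
  · have haa : a * star a = 1 := by rw [hb0] at hnorm; simpa using hnorm
    obtain ⟨x, y, hxy⟩ := diag_commutator a haa
    refine ⟨x, y, Subtype.ext ?_⟩
    rw [hxy]
    ext i j
    fin_cases i <;> fin_cases j <;> simp [← ha, ← hb, h11, h10, hb0]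
  · -- setup of the eigenvalue
    have hre2 : a.re ^ 2 ≤ 1 := by
      have h1 : Complex.normSq a + Complex.normSq b = 1 := by
        have : ((Complex.normSq a : ℂ)) + (Complex.normSq b : ℂ) = 1 := by
          simp only [← Complex.mul_conj, ← Complex.star_def]
          exact hnorm
        exact_mod_cast this
      have h2 := Complex.normSq_nonneg b
      have h3 : a.re ^ 2 ≤ Complex.normSq a := by
        rw [Complex.normSq_apply]; nlinarith [sq_nonneg a.im]
      nlinarith
    set s : ℝ := Real.sqrt (1 - a.re ^ 2) with hs
    have hs2 : s ^ 2 = 1 - a.re ^ 2 := Real.sq_sqrt (by linarith)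
    set lam : ℂ := ⟨a.re, s⟩ with hlam
    have hl1 : lam * star lam = 1 := by
      rw [Complex.star_def, Complex.mul_conj]
      have : Complex.normSq lam = 1 := by
        rw [hlam, Complex.normSq_mk]; nlinarith
      rw [this]; norm_num
    have htr : lam + star lam = a + star a := by
      apply Complex.ext <;> simp [Complex.star_def, hlam]
    have key : lam ^ 2 - (a + star a) * lam + 1 = 0 := by
      rw [← htr]; linear_combination -hl1
    have keyc : (star lam) ^ 2 - (a + star a) * (star lam) + 1 = 0 := by
      rw [← htr]; linear_combination -hl1
    set N : ℝ := Complex.normSq b + Complex.normSq (lam - a) with hN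
    have hNpos : 0 < N :=
      add_pos_of_pos_of_nonneg (Complex.normSq_pos.2 hb0) (Complex.normSq_nonneg _)
    set n : ℝ := Real.sqrt N with hn
    have hnpos : 0 < n := Real.sqrt_pos.2 hNpos
    have hn0 : (n : ℂ) ≠ 0 := by exact_mod_cast hnpos.ne'
    have hn2 : (n : ℂ) ^ 2 = b * star b + (lam - a) * star (lam - a) := by
      simp only [Complex.star_def, Complex.mul_conj]
      have : (n : ℝ) ^ 2 = N := Real.sq_sqrt hNpos.le
      rw [← Complex.ofReal_pow, this, hN]
      push_cast
      ring
    have hstar_n : star ((n : ℂ)) = (n : ℂ) := by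
      rw [Complex.star_def, Complex.conj_ofReal]
    have hu_norm : (b / n) * star (b / n) +
        (-(star (lam - a)) / n) * star (-(star (lam - a)) / n) = 1 := by
      simp only [star_div₀, star_neg, star_star, Complex.star_def,
        Complex.conj_ofReal, map_sub, Complex.conj_conj] at hn2 ⊢
      field_simp
      ring_nf
      ring_nf at hn2
      first
        | linear_combination hn2
        | linear_combination -hn2
    set u := mk (b / n) (-(star (lam - a)) / n) hu_norm with hu
    set d := mk lam 0 (by simpa using hl1) with hd
    have hub : u.1 = !![b / n, -(star (lam - a)) / n;
        -(star (-(star (lam - a)) / n)), star (b / n)] := rfl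
    have hdb : d.1 = !![lam, 0; -(star (0:ℂ)), star lam] := rfl
    have hg' : g.1 = !![a, b; -(star b), star a] := by
      ext i j
      fin_cases i <;> fin_cases j <;> simp [← ha, ← hb, h11, h10]
    have huu : u.1 * star u.1 = 1 :=
      Matrix.mem_unitaryGroup_iff.1 (Matrix.mem_specialUnitaryGroup_iff.1 u.2).1
    clear_value u d n lam s a b
    have hgu : g.1 * u.1 = u.1 * d.1 := by
      rw [hub, hdb, hg', Matrix.mul_fin_two, Matrix.mul_fin_two]
      simp only [star_div₀, star_neg, star_star, hstar_n, star_sub, star_zero,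
        Complex.star_def, Complex.conj_conj] at key keyc hnorm ⊢
      ext i j
      fin_cases i <;> fin_cases j <;>
        simp only [Matrix.cons_val', Matrix.cons_val_zero, Matrix.cons_val_one,
          Matrix.head_cons, Matrix.head_fin_const, Matrix.empty_val',
          Matrix.cons_val_fin_one, Matrix.of_apply, Fin.zero_eta, Fin.mk_one] <;>
        field_simp <;> ring_nf <;> ring_nf at key keyc hnorm <;>
        first
          | ring
          | linear_combination key
          | linear_combination -key
          | linear_combination keyc
          | linear_combination -keyc
          | linear_combination key + hnorm
          | linear_combination -key - hnorm
          | linear_combination keyc + hnorm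
          | linear_combination -keyc - hnorm
          | linear_combination b * key + b * hnorm
          | linear_combination -b * key - b * hnorm
          | skip
      all_goals first
        | linear_combination keyc + hnorm
        | linear_combination -keyc - hnorm
        | linear_combination (n:ℂ)^2 * key + (n:ℂ)^2 * hnorm
        | linear_combination -(n:ℂ)^2 * key - (n:ℂ)^2 * hnorm
        | linear_combination (n:ℂ)^2 * keyc + (n:ℂ)^2 * hnorm
        | linear_combination -(n:ℂ)^2 * keyc - (n:ℂ)^2 * hnorm
    have hg : g = u * d * u⁻¹ := by
      apply Subtype.ext
      show g.1 = u.1 * d.1 * star u.1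
      rw [← hgu, mul_assoc, huu, mul_one]
    obtain ⟨x, y, hxy⟩ := diag_commutator lam hl1
    have hdxy : d = ⁅x, y⁆ := by
      apply Subtype.ext
      rw [hxy]
      ext i j
      fin_cases i <;> fin_cases j <;> simp [hd, mk]
    refine ⟨u * x * u⁻¹, u * y * u⁻¹, ?_⟩
    rw [hg, hdxy]
    simp only [commutatorElement_def, _root_.mul_inv_rev, inv_inv]
    group

end SU2ProofAux


open SU2ProofAux in
/-- Let `f : SU(2) × SU(2) → SU(2)` be a continuous group homomorphism.
Then `f` is trivial on at least one of the two factors. -/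
theorem continuous_hom_SU2_prod_SU2_trivial_on_a_factor
    (f : ↥(Matrix.specialUnitaryGroup (Fin 2) ℂ) × ↥(Matrix.specialUnitaryGroup (Fin 2) ℂ) →*
      ↥(Matrix.specialUnitaryGroup (Fin 2) ℂ))
    (hf : Continuous f) :
    (∀ g, f (g, 1) = 1) ∨ (∀ h, f (1, h) = 1) := by
  by_contra hcon
  push_neg at hcon
  obtain ⟨⟨g₀, hg₀⟩, ⟨h₀, hh₀⟩⟩ := hcon
  have triv : ∀ (φ : ↥(Matrix.specialUnitaryGroup (Fin 2) ℂ) →*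
      ↥(Matrix.specialUnitaryGroup (Fin 2) ℂ)),
      (∀ x y, φ x * φ y = φ y * φ x) → ∀ g, φ g = 1 := by
    intro φ hφ g
    obtain ⟨x, y, rfl⟩ := exists_commutator g
    rw [map_commutatorElement]
    exact commutatorElement_eq_one_iff_commute.2 (hφ x y)
  set φ₁ := f.comp (MonoidHom.inl _ _) with hφ₁
  set φ₂ := f.comp (MonoidHom.inr _ _) with hφ₂
  have happ1 : ∀ g, φ₁ g = f (g, 1) := fun g => rfl
  have happ2 : ∀ h, φ₂ h = f (1, h) := fun h => rfl
  have hnc : ∃ x y, φ₁ x * φ₁ y ≠ φ₁ y * φ₁ x := by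
    by_contra hall
    push_neg at hall
    exact hg₀ (happ1 g₀ ▸ triv φ₁ hall g₀)
  obtain ⟨x, y, hxy⟩ := hnc
  have hswap : ∀ (u v : ↥(Matrix.specialUnitaryGroup (Fin 2) ℂ)),
      φ₂ v * φ₁ u = φ₁ u * φ₂ v := by
    intro u v
    rw [happ1, happ2, ← _root_.map_mul, ← _root_.map_mul]
    congr 1
    simp [Prod.ext_iff]
  have hscal : ∀ h, ∃ c : ℂ, (φ₂ h).1 = c • 1 := by
    intro h
    apply scalar_of_comm2 (A := (φ₁ x).1) (B := (φ₁ y).1)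
    · exact congrArg Subtype.val (hswap x h)
    · exact congrArg Subtype.val (hswap y h)
    · intro hAB
      exact hxy (Subtype.ext hAB)
  have hcomm2 : ∀ h h', φ₂ h * φ₂ h' = φ₂ h' * φ₂ h := by
    intro h h'
    obtain ⟨c, hc⟩ := hscal h
    obtain ⟨c', hc'⟩ := hscal h'
    apply Subtype.ext
    show (φ₂ h).1 * (φ₂ h').1 = (φ₂ h').1 * (φ₂ h).1
    rw [hc, hc', smul_mul_smul_comm, smul_mul_smul_comm, mul_comm c c']
  exact hh₀ (happ2 h₀ ▸ triv φ₂ hcomm2 h₀)
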